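/- For every odd integer b ≥ 1 and every p ∈ [0,1], the variance of the block-median indicator is no larger than the Bernoulli variance: q_b(p)·(1 − q_b(p)) ≤ p·(1 − p). -/

import Mathlib

/-- The majority function `q_b(p)`: the probability that a `Binomial(b,p)` random
variable is at least `(b+1)/2`. -/
noncomputable def qmaj (b : ℕ) (p : ℝ) : ℝ :=
  ∑ r ∈ Finset.Icc ((b + 1) / 2) b, (b.choose r : ℝ) * p ^ r * (1 - p) ^ (b - r)

/-- Reformulation of `qmaj` for odd `b = 2k+1` as a sum over `range (k+1)`. -/
noncomputable def Smaj (k : ℕ) (p : ℝ) : ℝ :=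
  ∑ j ∈ Finset.range (k + 1),
    ((2 * k + 1).choose (k + 1 + j) : ℝ) * p ^ (k + 1 + j) * (1 - p) ^ (k - j)

lemma qmaj_eq_Smaj (k : ℕ) (p : ℝ) : qmaj (2 * k + 1) p = Smaj k p := by
  unfold qmaj Smaj
  rw [show (2 * k + 1 + 1) / 2 = k + 1 by omega,
      show Finset.Icc (k + 1) (2 * k + 1) = Finset.Ico (k + 1) (2 * k + 2) from
        (Finset.Ico_add_one_right_eq_Icc _ _).symm,
      Finset.sum_Ico_eq_sum_range,
      show 2 * k + 2 - (k + 1) = k + 1 by omega]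
  refine Finset.sum_congr rfl fun j _ => ?_
  rw [show 2 * k + 1 - (k + 1 + j) = k - j by omega]

lemma pascal_twice (k j : ℕ) :
    (2 * k + 1 + 1 + 1).choose (k + j + 1 + 1)
      = (2 * k + 1).choose (k + j)
        + ((2 * k + 1).choose (k + j + 1) + (2 * k + 1).choose (k + j + 1))
        + (2 * k + 1).choose (k + j + 1 + 1) := by
  calc (2 * k + 1 + 1 + 1).choose (k + j + 1 + 1)
      = (2 * k + 1 + 1).choose (k + j + 1) + (2 * k + 1 + 1).choose (k + j + 1 + 1) :=
        Nat.choose_succ_succ' _ _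
    _ = ((2 * k + 1).choose (k + j) + (2 * k + 1).choose (k + j + 1))
        + ((2 * k + 1).choose (k + j + 1) + (2 * k + 1).choose (k + j + 1 + 1)) := by
        rw [Nat.choose_succ_succ' (2 * k + 1) (k + j), Nat.choose_succ_succ' (2 * k + 1) (k + j + 1)]
    _ = _ := by ring

lemma Smaj_succ (k : ℕ) (p : ℝ) :
    Smaj (k + 1) p = Smaj k p
      + ((2 * k + 1).choose (k + 1) : ℝ) * (p * (1 - p)) ^ (k + 1) * (2 * p - 1) := by
  have hsplit : Smaj (k + 1) p
      = (∑ j ∈ Finset.range (k + 2),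
            ((2 * k + 1).choose (k + j) : ℝ) * p ^ (k + 2 + j) * (1 - p) ^ (k + 1 - j))
        + (∑ j ∈ Finset.range (k + 2),
            2 * ((2 * k + 1).choose (k + 1 + j) : ℝ) * p ^ (k + 2 + j) * (1 - p) ^ (k + 1 - j))
        + (∑ j ∈ Finset.range (k + 2),
            ((2 * k + 1).choose (k + 2 + j) : ℝ) * p ^ (k + 2 + j) * (1 - p) ^ (k + 1 - j)) := by
    unfold Smaj
    rw [← Finset.sum_add_distrib, ← Finset.sum_add_distrib]
    refine Finset.sum_congr rfl fun j _ => ?_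
    have h := pascal_twice k j
    have hcast : ((2 * (k + 1) + 1).choose (k + 1 + 1 + j) : ℝ)
        = ((2 * k + 1).choose (k + j) : ℝ)
          + (((2 * k + 1).choose (k + j + 1) : ℝ) + ((2 * k + 1).choose (k + j + 1) : ℝ))
          + ((2 * k + 1).choose (k + j + 1 + 1) : ℝ) := by
      rw [show 2 * (k + 1) + 1 = 2 * k + 1 + 1 + 1 by ring,
          show k + 1 + 1 + j = k + j + 1 + 1 by ring]
      exact_mod_cast congrArg (fun n : ℕ => (n : ℝ)) h
    rw [show k + 1 + 1 + j = k + 2 + j by ring] at hcast ⊢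
    rw [hcast, show k + j + 1 = k + 1 + j by ring, show k + 1 + j + 1 = k + 2 + j by ring]
    ring
  -- T3 (lowest choose index)
  have hT3 : (∑ j ∈ Finset.range (k + 2),
        ((2 * k + 1).choose (k + j) : ℝ) * p ^ (k + 2 + j) * (1 - p) ^ (k + 1 - j))
      = p ^ 2 * Smaj k p
        + ((2 * k + 1).choose k : ℝ) * p ^ (k + 2) * (1 - p) ^ (k + 1) := by
    rw [Finset.sum_range_succ'
      (fun j => ((2 * k + 1).choose (k + j) : ℝ) * p ^ (k + 2 + j) * (1 - p) ^ (k + 1 - j)) (k + 1)]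
    simp only [Nat.add_zero, Nat.sub_zero]
    unfold Smaj
    rw [Finset.mul_sum]
    congr 1
    refine Finset.sum_congr rfl fun j hj => ?_
    have hjk : j ≤ k := by simpa [Nat.lt_succ_iff] using hj
    rw [show k + (j + 1) = k + 1 + j by ring,
        show k + 2 + (j + 1) = (k + 1 + j) + 2 by ring,
        show k + 1 - (j + 1) = k - j by omega,
        pow_add]
    ring
  -- T2 (middle choose index)
  have hT2 : (∑ j ∈ Finset.range (k + 2),
        2 * ((2 * k + 1).choose (k + 1 + j) : ℝ) * p ^ (k + 2 + j) * (1 - p) ^ (k + 1 - j))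
      = 2 * p * (1 - p) * Smaj k p := by
    rw [Finset.sum_range_succ]
    have hz : (2 * k + 1).choose (k + 1 + (k + 1)) = 0 := by
      apply Nat.choose_eq_zero_of_lt; omega
    rw [hz]
    unfold Smaj
    rw [Finset.mul_sum]
    simp only [Nat.cast_zero]
    rw [show (2 * (0:ℝ) * p ^ (k + 2 + (k + 1)) * (1 - p) ^ (k + 1 - (k + 1))) = 0 by ring,
        add_zero]
    refine Finset.sum_congr rfl fun j hj => ?_
    have hjk : j ≤ k := by simpa [Nat.lt_succ_iff] using hj
    rw [show k + 2 + j = (k + 1 + j) + 1 by ring,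
        show k + 1 - j = (k - j) + 1 by omega,
        pow_succ, pow_succ]
    ring
  -- T1 (highest choose index)
  have hT1 : (∑ j ∈ Finset.range (k + 2),
        ((2 * k + 1).choose (k + 2 + j) : ℝ) * p ^ (k + 2 + j) * (1 - p) ^ (k + 1 - j))
      = (1 - p) ^ 2 * Smaj k p
        - ((2 * k + 1).choose (k + 1) : ℝ) * p ^ (k + 1) * (1 - p) ^ (k + 2) := by
    have hS : (1 - p) ^ 2 * Smaj k p
        = (∑ j ∈ Finset.range k,
            ((2 * k + 1).choose (k + 2 + j) : ℝ) * p ^ (k + 2 + j) * (1 - p) ^ (k + 1 - j))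
          + ((2 * k + 1).choose (k + 1) : ℝ) * p ^ (k + 1) * (1 - p) ^ (k + 2) := by
      unfold Smaj
      rw [Finset.mul_sum]
      rw [Finset.sum_range_succ'
        (fun j => (1 - p) ^ 2
          * (((2 * k + 1).choose (k + 1 + j) : ℝ) * p ^ (k + 1 + j) * (1 - p) ^ (k - j))) k]
      congr 1
      · refine Finset.sum_congr rfl fun j hj => ?_
        have hjk : j < k := Finset.mem_range.mp hj
        rw [show k + 1 + (j + 1) = k + 2 + j by ring,
            show k + 1 - j = (k - (j + 1)) + 2 by omega,
            pow_add]
        ring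
      · simp only [Nat.add_zero, Nat.sub_zero]
        rw [show (1 - p) ^ (k + 2) = (1 - p) ^ k * (1 - p) ^ 2 from by rw [pow_add]]
        ring
    have hz1 : (2 * k + 1).choose (k + 2 + k) = 0 := by
      apply Nat.choose_eq_zero_of_lt; omega
    have hz2 : (2 * k + 1).choose (k + 2 + (k + 1)) = 0 := by
      apply Nat.choose_eq_zero_of_lt; omega
    rw [Finset.sum_range_succ, Finset.sum_range_succ, hz1, hz2, hS]
    push_cast
    ring
  have hsym : ((2 * k + 1).choose k : ℝ) = ((2 * k + 1).choose (k + 1) : ℝ) := by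
    have h := Nat.choose_symm (show k ≤ 2 * k + 1 by omega)
    rw [show 2 * k + 1 - k = k + 1 by omega] at h
    exact_mod_cast h.symm
  rw [hsplit, hT1, hT2, hT3, hsym]
  rw [mul_pow, show k + 2 = (k + 1) + 1 from rfl, pow_succ p (k+1), pow_succ (1-p) (k+1)]
  ring

lemma Smaj_le (k : ℕ) (p : ℝ) (hp0 : 0 ≤ p) (hp : p ≤ 1 / 2) : Smaj k p ≤ p := by
  induction k with
  | zero => simp [Smaj]
  | succ k ih =>
    rw [Smaj_succ]
    have h1 : (0:ℝ) ≤ ((2 * k + 1).choose (k + 1) : ℝ) := by positivity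
    have h2 : (0:ℝ) ≤ (p * (1 - p)) ^ (k + 1) := by
      apply pow_nonneg
      apply mul_nonneg hp0
      linarith
    have h3 : 2 * p - 1 ≤ 0 := by linarith
    nlinarith [mul_nonneg h1 h2]

lemma qmaj_nonneg (b : ℕ) (p : ℝ) (hp0 : 0 ≤ p) (hp1 : p ≤ 1) : 0 ≤ qmaj b p := by
  unfold qmaj
  apply Finset.sum_nonneg
  intro r _
  have : (0:ℝ) ≤ 1 - p := by linarith
  positivity

lemma binom_total (k : ℕ) (q : ℝ) :
    ∑ r ∈ Finset.range (2 * k + 2),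
      ((2 * k + 1).choose r : ℝ) * q ^ r * (1 - q) ^ (2 * k + 1 - r) = 1 := by
  calc ∑ r ∈ Finset.range (2 * k + 2),
        ((2 * k + 1).choose r : ℝ) * q ^ r * (1 - q) ^ (2 * k + 1 - r)
      = ∑ r ∈ Finset.range (2 * k + 1 + 1),
        q ^ r * (1 - q) ^ (2 * k + 1 - r) * ((2 * k + 1).choose r : ℝ) := by
        refine Finset.sum_congr rfl fun r _ => ?_
        ring
    _ = (q + (1 - q)) ^ (2 * k + 1) := (add_pow q (1 - q) (2 * k + 1)).symm
    _ = 1 := by rw [show q + (1 - q) = 1 by ring, one_pow]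

lemma qmaj_decomp (k : ℕ) (q : ℝ) :
    (∑ r ∈ Finset.range (k + 1),
        ((2 * k + 1).choose r : ℝ) * q ^ r * (1 - q) ^ (2 * k + 1 - r))
      + qmaj (2 * k + 1) q
    = ∑ r ∈ Finset.range (2 * k + 2),
        ((2 * k + 1).choose r : ℝ) * q ^ r * (1 - q) ^ (2 * k + 1 - r) := by
  unfold qmaj
  rw [show (2 * k + 1 + 1) / 2 = k + 1 by omega,
      show Finset.Icc (k + 1) (2 * k + 1) = Finset.Ico (k + 1) (2 * k + 2) from
        (Finset.Ico_add_one_right_eq_Icc _ _).symm,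
      Finset.range_eq_Ico, Finset.range_eq_Ico]
  exact Finset.sum_Ico_consecutive (M := ℝ) _ (m := 0) (n := k + 1) (k := 2 * k + 2) (by omega) (by omega)

lemma qmaj_symm (k : ℕ) (p : ℝ) : qmaj (2 * k + 1) (1 - p) = 1 - qmaj (2 * k + 1) p := by
  have hflip : (∑ r ∈ Finset.range (k + 1),
        ((2 * k + 1).choose r : ℝ) * (1 - p) ^ r * (1 - (1 - p)) ^ (2 * k + 1 - r))
      = qmaj (2 * k + 1) p := by
    unfold qmaj
    rw [show (2 * k + 1 + 1) / 2 = k + 1 by omega]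
    refine Finset.sum_nbij' (fun r => 2 * k + 1 - r) (fun r => 2 * k + 1 - r)
      ?_ ?_ ?_ ?_ ?_
    · intro a ha
      simp only [Finset.mem_range] at ha
      simp only [Finset.mem_Icc]
      omega
    · intro a ha
      simp only [Finset.mem_Icc] at ha
      simp only [Finset.mem_range]
      omega
    · intro a ha
      simp only [Finset.mem_range] at ha
      show 2 * k + 1 - (2 * k + 1 - a) = a
      omega
    · intro a ha
      simp only [Finset.mem_Icc] at ha
      show 2 * k + 1 - (2 * k + 1 - a) = a
      omega
    · intro a ha
      simp only [Finset.mem_range] at ha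
      show ((2 * k + 1).choose a : ℝ) * (1 - p) ^ a * (1 - (1 - p)) ^ (2 * k + 1 - a)
        = ((2 * k + 1).choose (2 * k + 1 - a) : ℝ) * p ^ (2 * k + 1 - a)
          * (1 - p) ^ (2 * k + 1 - (2 * k + 1 - a))
      have h1 : (2 * k + 1).choose (2 * k + 1 - a) = (2 * k + 1).choose a :=
        Nat.choose_symm (by omega)
      rw [h1, show 2 * k + 1 - (2 * k + 1 - a) = a by omega,
          show 1 - (1 - p) = p by ring]
      ring
  have h1 := qmaj_decomp k (1 - p)
  rw [binom_total k (1 - p), hflip] at h1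
  linarith

theorem majority_variance_domination (b : ℕ) (hb : Odd b) (hb1 : 1 ≤ b)
    (p : ℝ) (hp0 : 0 ≤ p) (hp1 : p ≤ 1) :
    qmaj b p * (1 - qmaj b p) ≤ p * (1 - p) := by
  obtain ⟨k, hk⟩ := hb
  have hbk : b = 2 * k + 1 := by omega
  subst hbk
  rcases le_or_gt p (1 / 2) with hp | hp
  · have hq0 : 0 ≤ qmaj (2 * k + 1) p := qmaj_nonneg _ _ hp0 hp1
    have hqp : qmaj (2 * k + 1) p ≤ p := by
      rw [qmaj_eq_Smaj]; exact Smaj_le k p hp0 hp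
    nlinarith [mul_nonneg (sub_nonneg.mpr hqp)
      (show (0:ℝ) ≤ 1 - p - qmaj (2 * k + 1) p by linarith)]
  · have hp'0 : (0:ℝ) ≤ 1 - p := by linarith
    have hp'half : 1 - p ≤ 1 / 2 := by linarith
    have hp'1 : 1 - p ≤ 1 := by linarith
    have hq' : qmaj (2 * k + 1) (1 - p) = 1 - qmaj (2 * k + 1) p := qmaj_symm k p
    have hq'0 : 0 ≤ qmaj (2 * k + 1) (1 - p) := qmaj_nonneg _ _ hp'0 hp'1
    have hq'p : qmaj (2 * k + 1) (1 - p) ≤ 1 - p := by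
      rw [qmaj_eq_Smaj]; exact Smaj_le k (1 - p) hp'0 hp'half
    rw [hq'] at hq'0 hq'p
    nlinarith [mul_nonneg (sub_nonneg.mpr hq'p)
      (show (0:ℝ) ≤ 1 - (1 - p) - (1 - qmaj (2 * k + 1) p) by linarith)]
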